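/- arXiv:2603.25717 — 3 statements merged into one kernel-verified Lean document; each statement's English description precedes it below -/
import Mathlib

section
/- For every real β > 0, ∑_{m₁=0}^∞ ∑_{m₂=m₁+1}^∞ β / ( (m₁+β) · m₂ · (m₂+β) ) = π²/6. -/
open scoped BigOperators
open Finset

noncomputable def Hh (n : ℕ) : ℝ := ∑ r ∈ Finset.range n, 1/((r:ℝ)+1)
noncomputable def Pp (β : ℝ) (N : ℕ) : ℝ :=
  ∑ m ∈ Finset.range (N+1), ∑ a ∈ Finset.range m, β/(((a:ℝ)+β)*(m:ℝ)*((m:ℝ)+β))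
noncomputable def Qq (β : ℝ) (N : ℕ) : ℝ :=
  ∑ i ∈ Finset.range N, (Hh N - Hh (N-1-i))/((i:ℝ)+1+β)

lemma Hh_succ (n : ℕ) : Hh (n+1) = Hh n + 1/((n:ℝ)+1) := by
  simp [Hh, Finset.sum_range_succ]

lemma Hh_reflect (N : ℕ) : ∑ i ∈ Finset.range N, 1/((N:ℝ)-(i:ℝ)) = Hh N := by
  rw [Hh, ← Finset.sum_range_reflect (fun r => 1/((r:ℝ)+1)) N]
  refine Finset.sum_congr rfl fun i hi => ?_
  rw [Finset.mem_range] at hi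
  have : ((N - 1 - i : ℕ) : ℝ) = (N:ℝ) - 1 - i := by
    have h1 : (1:ℕ) + i ≤ N := by omega
    rw [Nat.sub_sub, Nat.cast_sub h1]
    push_cast; ring
  rw [this]; ring_nf

lemma Pp_succ (β : ℝ) (N : ℕ) : Pp β (N+1) = Pp β N +
    ∑ a ∈ Finset.range (N+1), β/(((a:ℝ)+β)*((N:ℝ)+1)*(((N:ℝ)+1)+β)) := by
  rw [Pp, Finset.sum_range_succ]
  push_cast
  rfl

lemma PQ (β : ℝ) (hβ : 0 < β) (N : ℕ) : Pp β N = Qq β N := by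
  induction N with
  | zero => simp [Pp, Qq]
  | succ N ih =>
    rw [Pp_succ, ih]
    have hQ : Qq β (N+1) = (∑ i ∈ Finset.range N, (Hh (N+1) - Hh (N-i))/((i:ℝ)+1+β))
        + Hh (N+1)/(((N:ℝ)+1)+β) := by
      rw [Qq, Finset.sum_range_succ]
      simp only [Nat.add_sub_cancel]
      congr 1
      · simp [Nat.sub_self, Hh]
      -- leftover?
    rw [hQ]
    -- expand Hh (N+1)/S
    have hS : Hh (N+1)/(((N:ℝ)+1)+β)
        = (∑ i ∈ Finset.range N, (1/((N:ℝ)-(i:ℝ)))/(((N:ℝ)+1)+β))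
          + (1/((N:ℝ)+1))/(((N:ℝ)+1)+β) := by
      rw [Hh_succ, ← Hh_reflect N, add_div, Finset.sum_div]
    rw [hS, Finset.sum_range_succ', Qq, ← add_assoc, ← add_assoc,
      ← Finset.sum_add_distrib, ← Finset.sum_add_distrib]
    have hN1 : ((N:ℝ)+1) ≠ 0 := by positivity
    have hS0 : ((N:ℝ)+1)+β ≠ 0 := by positivity
    congr 1
    · refine Finset.sum_congr rfl fun i hi => ?_
      rw [Finset.mem_range] at hi
      have hiN : (i:ℝ) < (N:ℝ) := by exact_mod_cast hi
      have hX : (N:ℝ) - (i:ℝ) ≠ 0 := by linarith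
      have hY : (i:ℝ)+1+β ≠ 0 := by positivity
      have h2 : Hh (N-i) = Hh (N-1-i) + 1/((N:ℝ)-(i:ℝ)) := by
        have he : N - i = (N-1-i)+1 := by omega
        rw [he, Hh_succ]
        have : ((N - 1 - i : ℕ) : ℝ) = (N:ℝ) - 1 - i := by
          have h1 : (1:ℕ) + i ≤ N := by omega
          rw [Nat.sub_sub, Nat.cast_sub h1]; push_cast; ring
        rw [this]; ring_nf
      rw [Hh_succ, h2]
      push_cast
      field_simp
      ring
    · push_cast [Nat.cast_zero]
      rw [zero_add]
      field_simp

lemma Pp_one (N : ℕ) : Pp 1 N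
    = (∑ m ∈ Finset.range (N+1), 1/((m:ℝ)+1)^2) - Hh (N+1)/((N:ℝ)+1) := by
  induction N with
  | zero => simp [Pp, Hh]
  | succ N ih =>
    rw [Pp_succ, ih, Finset.sum_range_succ _ (N+1)]
    have hsum : ∑ a ∈ Finset.range (N+1), 1/(((a:ℝ)+1)*(((N:ℝ)+1)*(((N:ℝ)+1)+1)))
        = Hh (N+1) * (1/(((N:ℝ)+1)*(((N:ℝ)+1)+1))) := by
      rw [Hh, Finset.sum_mul]
      refine Finset.sum_congr rfl fun a _ => ?_
      rw [div_mul_div_comm, one_mul]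
    have hca : ∀ a : ℕ, (1:ℝ)/(((a:ℝ)+1)*((N:ℝ)+1)*(((N:ℝ)+1)+1))
        = 1/(((a:ℝ)+1)*(((N:ℝ)+1)*(((N:ℝ)+1)+1))) := by
      intro a; ring_nf
    have h1 : ∑ a ∈ Finset.range (N+1), (1:ℝ)/(((a:ℝ)+1)*((N:ℝ)+1)*(((N:ℝ)+1)+1))
        = Hh (N+1) * (1/(((N:ℝ)+1)*(((N:ℝ)+1)+1))) := by
      rw [← hsum]; exact Finset.sum_congr rfl fun a _ => hca a
    rw [Hh_succ (N+1)]
    push_cast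
    rw [h1]
    have hN1 : ((N:ℝ)+1) ≠ 0 := by positivity
    have hN2 : ((N:ℝ)+2) ≠ 0 := by positivity
    field_simp
    ring

lemma Hh_mono : Monotone Hh := by
  intro m n hmn
  refine Finset.sum_le_sum_of_subset_of_nonneg (Finset.range_subset_range.2 hmn) fun r _ _ => by positivity

lemma w_le (N i : ℕ) (hi : i < N) :
    Hh N - Hh (N-1-i) ≤ ((i:ℝ)+1) * (1/((N:ℝ)-(i:ℝ))) := by
  have hle : N-1-i ≤ N := by omega
  have hNi : (0:ℝ) < (N:ℝ)-(i:ℝ) := by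
    have : (i:ℝ) < (N:ℝ) := by exact_mod_cast hi
    linarith
  have heq : Hh N - Hh (N-1-i) = ∑ r ∈ Finset.Ico (N-1-i) N, 1/((r:ℝ)+1) := by
    rw [Hh, Hh, Finset.sum_Ico_eq_sub _ hle]
  rw [heq]
  have hcard : (Finset.Ico (N-1-i) N).card = i+1 := by
    rw [Nat.card_Ico]; omega
  calc ∑ r ∈ Finset.Ico (N-1-i) N, 1/((r:ℝ)+1)
      ≤ (Finset.Ico (N-1-i) N).card • (1/((N:ℝ)-(i:ℝ))) := by
        refine Finset.sum_le_card_nsmul _ _ _ fun r hr => ?_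
        rw [Finset.mem_Ico] at hr
        have h1 : (N - i : ℕ) ≤ r + 1 := by omega
        have h2 : ((N - i : ℕ) : ℝ) = (N:ℝ) - (i:ℝ) := by
          rw [Nat.cast_sub (by omega)]
        have h3 : (N:ℝ) - (i:ℝ) ≤ (r:ℝ)+1 := by
          rw [← h2]; exact_mod_cast h1
        exact one_div_le_one_div_of_le hNi h3
    _ = ((i:ℝ)+1) * (1/((N:ℝ)-(i:ℝ))) := by
        rw [hcard, nsmul_eq_mul]; push_cast; ring

lemma Q_diff (β : ℝ) (hβ : 0 < β) (N : ℕ) :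
    |Qq β N - Qq 1 N| ≤ |1-β| * (2 * Hh N / ((N:ℝ)+1)) := by
  rw [Qq, Qq, ← Finset.sum_sub_distrib]
  refine (Finset.abs_sum_le_sum_abs _ _).trans ?_
  have key : ∀ i ∈ Finset.range N,
      |(Hh N - Hh (N-1-i))/((i:ℝ)+1+β) - (Hh N - Hh (N-1-i))/((i:ℝ)+1+1)|
        ≤ |1-β| * (1/(((i:ℝ)+1)*((N:ℝ)-(i:ℝ)))) := by
    intro i hi
    rw [Finset.mem_range] at hi
    have hiN : (i:ℝ) < (N:ℝ) := by exact_mod_cast hi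
    have hNi : (0:ℝ) < (N:ℝ)-(i:ℝ) := by linarith
    set w := Hh N - Hh (N-1-i) with hw
    have hw0 : 0 ≤ w := sub_nonneg.2 (Hh_mono (by omega))
    have hYa : (0:ℝ) < (i:ℝ)+1+β := by positivity
    have hYb : (0:ℝ) < (i:ℝ)+1+1 := by positivity
    have hrw : w/((i:ℝ)+1+β) - w/((i:ℝ)+1+1) = w*(1-β)/(((i:ℝ)+1+β)*((i:ℝ)+1+1)) := by
      field_simp; ring
    rw [hrw, abs_div, abs_mul, abs_of_nonneg hw0, abs_of_pos (by positivity : (0:ℝ) < ((i:ℝ)+1+β)*((i:ℝ)+1+1))]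
    rw [mul_comm w |1-β|, mul_div_assoc]
    refine mul_le_mul_of_nonneg_left ?_ (abs_nonneg _)
    calc w/(((i:ℝ)+1+β)*((i:ℝ)+1+1)) ≤ w/(((i:ℝ)+1)*((i:ℝ)+1)) := by
          refine div_le_div_of_nonneg_left hw0 (by positivity) ?_
          have h1 : (i:ℝ)+1 ≤ (i:ℝ)+1+β := by linarith
          have h2 : (i:ℝ)+1 ≤ (i:ℝ)+1+1 := by linarith
          nlinarith
      _ ≤ (((i:ℝ)+1) * (1/((N:ℝ)-(i:ℝ))))/(((i:ℝ)+1)*((i:ℝ)+1)) := by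
          exact (div_le_div_iff_of_pos_right (by positivity)).2 (w_le N i hi)
      _ = 1/(((i:ℝ)+1)*((N:ℝ)-(i:ℝ))) := by
          field_simp
  refine (Finset.sum_le_sum key).trans ?_
  rw [← Finset.mul_sum]
  refine mul_le_mul_of_nonneg_left ?_ (abs_nonneg _)
  have hsplit : ∀ i ∈ Finset.range N,
      1/(((i:ℝ)+1)*((N:ℝ)-(i:ℝ)))
        = 1/((i:ℝ)+1) * (1/((N:ℝ)+1)) + 1/((N:ℝ)-(i:ℝ)) * (1/((N:ℝ)+1)) := by
    intro i hi
    rw [Finset.mem_range] at hi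
    have hiN : (i:ℝ) < (N:ℝ) := by exact_mod_cast hi
    have hNi : (N:ℝ)-(i:ℝ) ≠ 0 := by linarith
    have hN1 : (N:ℝ)+1 ≠ 0 := by positivity
    have hi1 : (i:ℝ)+1 ≠ 0 := by positivity
    field_simp
    ring
  rw [Finset.sum_congr rfl hsplit, Finset.sum_add_distrib, ← Finset.sum_mul, ← Finset.sum_mul,
    Hh_reflect]
  have : ∑ i ∈ Finset.range N, 1/((i:ℝ)+1) = Hh N := rfl
  rw [this]
  rw [div_eq_mul_one_div]
  ring_nf
  exact le_refl _

open Filter Real in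
lemma tendsto_Hh_div : Filter.Tendsto (fun n : ℕ => Hh n / ((n:ℝ)+1)) atTop (nhds 0) := by
  have hH : ∀ n : ℕ, Hh n = ((harmonic n : ℚ) : ℝ) := by
    intro n
    rw [Hh, harmonic]
    push_cast
    simp [one_div]
  have hlog : Filter.Tendsto (fun n : ℕ => Real.log n / (n:ℝ)) atTop (nhds 0) := by
    have h := Real.isLittleO_log_id_atTop.tendsto_div_nhds_zero
    exact h.comp tendsto_natCast_atTop_atTop
  have hone : Filter.Tendsto (fun n : ℕ => 1 / ((n:ℝ)+1)) atTop (nhds 0) :=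
    tendsto_one_div_add_atTop_nhds_zero_nat
  have hg : Filter.Tendsto (fun n : ℕ => 1/((n:ℝ)+1) + Real.log n / (n:ℝ)) atTop (nhds 0) := by
    simpa using hone.add hlog
  refine squeeze_zero' ?_ ?_ hg
  · filter_upwards with n
    have : 0 ≤ Hh n := by
      rw [Hh]; positivity
    positivity
  · filter_upwards [Filter.eventually_ge_atTop 1] with n hn
    have hn1 : (1:ℝ) ≤ (n:ℝ) := by exact_mod_cast hn
    have hlog0 : 0 ≤ Real.log n := Real.log_nonneg hn1
    have h1 : Hh n ≤ 1 + Real.log n := by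
      rw [hH]; exact harmonic_le_one_add_log n
    have h2 : Hh n / ((n:ℝ)+1) ≤ (1 + Real.log n)/((n:ℝ)+1) := by
      apply div_le_div_of_nonneg_right h1 (by positivity) |>.trans_eq rfl
    refine h2.trans ?_
    rw [add_div]
    gcongr
    linarith

open Filter Real in
lemma tendsto_Pp_one : Filter.Tendsto (fun N : ℕ => Pp 1 N) atTop (nhds (Real.pi^2/6)) := by
  have hA : Filter.Tendsto (fun N : ℕ => ∑ m ∈ Finset.range (N+1), 1/((m:ℝ)+1)^2)
      atTop (nhds (Real.pi^2/6)) := by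
    have h0 := hasSum_zeta_two.tendsto_sum_nat
    have h1 := h0.comp (tendsto_add_atTop_nat 2)
    refine h1.congr fun N => ?_
    show ∑ i ∈ Finset.range (N+2), 1/(i:ℝ)^2 = _
    rw [Finset.sum_range_succ' (fun i => 1/((i:ℝ))^2) (N+1)]
    push_cast
    norm_num
  have hB : Filter.Tendsto (fun N : ℕ => Hh (N+1) / ((N:ℝ)+1)) atTop (nhds 0) := by
    have heq : ∀ N : ℕ, Hh (N+1)/((N:ℝ)+1)
        = Hh N/((N:ℝ)+1) + (1/((N:ℝ)+1)) * (1/((N:ℝ)+1)) := by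
      intro N
      rw [Hh_succ, add_div, div_div, one_div_mul_one_div]
    have h2 : Filter.Tendsto (fun N : ℕ => Hh N/((N:ℝ)+1) + (1/((N:ℝ)+1)) * (1/((N:ℝ)+1)))
        atTop (nhds 0) := by
      simpa using tendsto_Hh_div.add
        (tendsto_one_div_add_atTop_nhds_zero_nat.mul tendsto_one_div_add_atTop_nhds_zero_nat)
    exact h2.congr fun N => (heq N).symm
  have := hA.sub hB
  rw [sub_zero] at this
  exact this.congr fun N => (Pp_one N).symm

open Filter Real in
lemma tendsto_Pp (β : ℝ) (hβ : 0 < β) :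
    Filter.Tendsto (fun N : ℕ => Pp β N) atTop (nhds (Real.pi^2/6)) := by
  have hfun : ∀ N, Pp β N = Pp 1 N + (Qq β N - Qq 1 N) := by
    intro N
    rw [← PQ β hβ, ← PQ 1 one_pos]
    ring
  have hdiff : Filter.Tendsto (fun N : ℕ => Qq β N - Qq 1 N) atTop (nhds 0) := by
    have hg : Filter.Tendsto (fun N : ℕ => |1-β| * (2 * Hh N / ((N:ℝ)+1))) atTop (nhds 0) := by
      have h2 : Filter.Tendsto (fun N : ℕ => 2 * Hh N / ((N:ℝ)+1)) atTop (nhds 0) := by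
        have := tendsto_Hh_div.const_mul 2
        rw [mul_zero] at this
        exact this.congr fun N => by rw [mul_div_assoc]
      have := h2.const_mul |1-β|
      rwa [mul_zero] at this
    exact squeeze_zero_norm (fun N => Q_diff β hβ N) hg
  have := tendsto_Pp_one.add hdiff
  rw [add_zero] at this
  exact this.congr fun N => (hfun N).symm

lemma Pp_def (β : ℝ) (N : ℕ) : Pp β N
  = ∑ m ∈ Finset.range (N+1), ∑ a ∈ Finset.range m, β/(((a:ℝ)+β)*(m:ℝ)*((m:ℝ)+β)) := rfl

/-- Depth-two Hurwitz-type identity: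
∑_{m₁ ≥ 0} ∑_{m₂ ≥ m₁+1} β/((m₁+β) m₂ (m₂+β)) = π²/6 for every β > 0. -/
theorem depth_two_hurwitz (β : ℝ) (hβ : 0 < β) :
    (∑' p : {p : ℕ × ℕ // p.1 + 1 ≤ p.2},
      β / (((p.1.1 : ℝ) + β) * (p.1.2 : ℝ) * ((p.1.2 : ℝ) + β)))
    = Real.pi ^ 2 / 6 := by
  classical
  have hmono : Monotone (Pp β) := by
    refine monotone_nat_of_le_succ fun N => ?_
    rw [Pp_def, Pp_def, Finset.sum_range_succ _ (N+1)]
    have : 0 ≤ ∑ a ∈ Finset.range (N+1), β/(((a:ℝ)+β)*((N+1:ℕ):ℝ)*(((N+1:ℕ):ℝ)+β)) := by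
      refine Finset.sum_nonneg fun a _ => div_nonneg hβ.le (by positivity)
    linarith
  have hPle : ∀ N, Pp β N ≤ Real.pi^2/6 := fun N => hmono.ge_of_tendsto (tendsto_Pp β hβ) N
  set tri : ℕ → Finset {p : ℕ × ℕ // p.1 + 1 ≤ p.2} := fun N =>
    (Finset.range (N+1) ×ˢ Finset.range (N+1)).subtype _ with htri_def
  have htri : ∀ N, (∑ x ∈ tri N,
      β / (((x.1.1 : ℝ) + β) * (x.1.2 : ℝ) * ((x.1.2 : ℝ) + β))) = Pp β N := by
    intro N
    rw [htri_def]
    rw [Finset.sum_subtype_eq_sum_filter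
      (fun q : ℕ × ℕ => β / (((q.1 : ℝ) + β) * (q.2 : ℝ) * ((q.2 : ℝ) + β)))]
    rw [Pp_def, Finset.sum_filter, Finset.sum_product, Finset.sum_comm]
    refine Finset.sum_congr rfl fun m hm => ?_
    rw [Finset.mem_range] at hm
    rw [← Finset.sum_filter]
    have hfe : Finset.filter (fun a => a + 1 ≤ m) (Finset.range (N+1)) = Finset.range m := by
      ext a
      simp only [Finset.mem_filter, Finset.mem_range]
      omega
    rw [hfe]
  have key : HasSum (fun p : {p : ℕ × ℕ // p.1 + 1 ≤ p.2} =>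
      β / (((p.1.1 : ℝ) + β) * (p.1.2 : ℝ) * ((p.1.2 : ℝ) + β))) (Real.pi^2/6) := by
    refine hasSum_of_isLUB_of_nonneg _ (fun p => div_nonneg hβ.le (by positivity)) ?_
    constructor
    · rintro x ⟨s, rfl⟩
      have hsub : s ⊆ tri (s.sup (fun x => x.1.2)) := by
        intro y hy
        have hy2 : y.1.2 ≤ s.sup (fun x => x.1.2) := Finset.le_sup (f := fun x => x.1.2) hy
        have hy1 : y.1.1 + 1 ≤ y.1.2 := y.2
        simp only [htri_def, Finset.mem_subtype, Finset.mem_product, Finset.mem_range]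
        omega
      calc ∑ i ∈ s, β / (((i.1.1 : ℝ) + β) * (i.1.2 : ℝ) * ((i.1.2 : ℝ) + β))
          ≤ ∑ i ∈ tri (s.sup (fun x => x.1.2)),
              β / (((i.1.1 : ℝ) + β) * (i.1.2 : ℝ) * ((i.1.2 : ℝ) + β)) :=
            Finset.sum_le_sum_of_subset_of_nonneg hsub
              (fun i _ _ => div_nonneg hβ.le (by positivity))
        _ = Pp β _ := htri _
        _ ≤ Real.pi^2/6 := hPle _
    · intro b hb
      refine le_of_tendsto (tendsto_Pp β hβ) ?_
      filter_upwards with N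
      exact (htri N) ▸ hb ⟨tri N, rfl⟩
  exact key.tsum_eq
end

section
/- For all integers N and m with 1 ≤ m ≤ N, ∑_{s=0}^{N-m} [ binom(N, s+m) / binom(N+s+m, s+m) ] · (m/(s+m)) · (-1)^s · binom(2m, m) · binom(2m−1+s, 2m−1) = 1. -/
open scoped BigOperators
open Nat

private def Tb (N m s : ℕ) : ℚ :=
  ((N.choose (s + m) : ℚ) / ((N + s + m).choose (s + m) : ℚ)) *
    ((m : ℚ) / ((s : ℚ) + (m : ℚ))) * (-1 : ℚ) ^ s *
    (((2 * m).choose m : ℚ)) * (((2 * m - 1 + s).choose (2 * m - 1) : ℚ))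

private def Gb (N m u : ℕ) : ℚ :=
  -((u : ℚ) * ((u : ℚ) + m) * ((u : ℚ) + N + m + 1)) /
      (2 * ((N : ℚ) - m + 1) * ((N : ℚ) + 1) ^ 2) * Tb (N + 1) m u

private def Fq (N m s k : ℕ) : ℚ :=
  (-1 : ℚ) ^ s * 2 * (m : ℚ) ^ 2 * ((N ! : ℚ)) ^ 2 * ((2 * m - 1 + s)! : ℚ) /
    ((k ! : ℚ) * (((N + s + m + 2)!) : ℚ) * ((m ! : ℚ)) ^ 2 * ((s ! : ℚ)))

section Facts
variable (N m s k : ℕ)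

private lemma fact_ne (n : ℕ) : ((n ! : ℚ)) ≠ 0 := by
  exact_mod_cast Nat.factorial_ne_zero n

private lemma lemA (hm : 1 ≤ m) (hk : N = s + m + k) :
    Tb N m s = ((N : ℚ) + s + m + 2) * ((N : ℚ) + s + m + 1) / ((s : ℚ) + m)
      * Fq N m s k := by
  simp only [Tb, Fq]
  rw [Nat.cast_choose ℚ (show s + m ≤ N by omega),
      Nat.cast_choose ℚ (show s + m ≤ N + s + m by omega),
      Nat.cast_choose ℚ (show m ≤ 2 * m by omega),
      Nat.cast_choose ℚ (show 2 * m - 1 ≤ 2 * m - 1 + s by omega),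
      show N - (s + m) = k from by omega,
      show N + s + m - (s + m) = N from by omega,
      show 2 * m - m = m from by omega,
      show 2 * m - 1 + s - (2 * m - 1) = s from by omega]
  have h2m' : 2 * m - 1 + 1 = 2 * m := by omega
  have h2m : (2 * m)! = 2 * m * (2 * m - 1)! := by
    conv_lhs => rw [← h2m']
    rw [Nat.factorial_succ, h2m']
  rw [show N + s + m + 2 = (N + s + m) + 1 + 1 from by omega, Nat.factorial_succ,
    Nat.factorial_succ, h2m]
  have d1 : (s : ℚ) + m ≠ 0 := by positivity
  push_cast
  field_simp [fact_ne]
  ring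

private lemma lemB (hm : 1 ≤ m) (hk : N = s + m + k) :
    Tb (N + 1) m s = ((N : ℚ) + 1) ^ 2 * ((N : ℚ) + s + m + 2) /
      (((s : ℚ) + m) * ((k : ℚ) + 1)) * Fq N m s k := by
  simp only [Tb, Fq]
  rw [Nat.cast_choose ℚ (show s + m ≤ N + 1 by omega),
      Nat.cast_choose ℚ (show s + m ≤ N + 1 + s + m by omega),
      Nat.cast_choose ℚ (show m ≤ 2 * m by omega),
      Nat.cast_choose ℚ (show 2 * m - 1 ≤ 2 * m - 1 + s by omega),
      show N + 1 - (s + m) = k + 1 from by omega,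
      show N + 1 + s + m - (s + m) = N + 1 from by omega,
      show 2 * m - m = m from by omega,
      show 2 * m - 1 + s - (2 * m - 1) = s from by omega]
  have h2m' : 2 * m - 1 + 1 = 2 * m := by omega
  have h2m : (2 * m)! = 2 * m * (2 * m - 1)! := by
    conv_lhs => rw [← h2m']
    rw [Nat.factorial_succ, h2m']
  rw [show N + 1 + s + m = (N + s + m) + 1 from by omega,
    show N + s + m + 2 = (N + s + m) + 1 + 1 from by omega]
  simp only [Nat.factorial_succ, h2m]
  have d1 : (s : ℚ) + m ≠ 0 := by positivity
  push_cast
  field_simp [fact_ne]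
  ring

private lemma lemC (hm : 1 ≤ m) (hk : N = s + m + k) :
    Tb (N + 1) m (s + 1) = -(((N : ℚ) + 1) ^ 2 * (2 * (m : ℚ) + s)) /
      (((s : ℚ) + m + 1) * ((s : ℚ) + 1)) * Fq N m s k := by
  simp only [Tb, Fq]
  rw [Nat.cast_choose ℚ (show s + 1 + m ≤ N + 1 by omega),
      Nat.cast_choose ℚ (show s + 1 + m ≤ N + 1 + (s + 1) + m by omega),
      Nat.cast_choose ℚ (show m ≤ 2 * m by omega),
      Nat.cast_choose ℚ (show 2 * m - 1 ≤ 2 * m - 1 + (s + 1) by omega),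
      show N + 1 - (s + 1 + m) = k from by omega,
      show N + 1 + (s + 1) + m - (s + 1 + m) = N + 1 from by omega,
      show 2 * m - m = m from by omega,
      show 2 * m - 1 + (s + 1) - (2 * m - 1) = s + 1 from by omega]
  have h2m' : 2 * m - 1 + 1 = 2 * m := by omega
  have h2m : (2 * m)! = 2 * m * (2 * m - 1)! := by
    conv_lhs => rw [← h2m']
    rw [Nat.factorial_succ, h2m']
  rw [show N + 1 + (s + 1) + m = (N + s + m) + 2 from by omega,
    show N + s + m + 2 = (N + s + m) + 1 + 1 from by omega,
    show 2 * m - 1 + (s + 1) = (2 * m - 1 + s) + 1 from by omega,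
    show s + 1 + m = (s + m) + 1 from by omega]
  simp only [Nat.factorial_succ, h2m]
  have d1 : (s : ℚ) + m + 1 ≠ 0 := by positivity
  have h2m1 : ((2 * m - 1 : ℕ) : ℚ) = 2 * (m : ℚ) - 1 := by
    push_cast [Nat.cast_sub (show 1 ≤ 2 * m by omega)]; ring
  push_cast [h2m1, pow_succ]
  field_simp [fact_ne]
  ring

end Facts

set_option maxHeartbeats 1000000 in
private lemma tele (N m s : ℕ) (hm : 1 ≤ m) (hs : s + m ≤ N) :
    Tb (N + 1) m s - Tb N m s = Gb N m (s + 1) - Gb N m s := by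
  obtain ⟨k, hk⟩ : ∃ k, N = s + m + k := ⟨N - (s + m), by omega⟩
  simp only [Gb]
  rw [lemA N m s k hm hk, lemB N m s k hm hk, lemC N m s k hm hk]
  generalize Fq N m s k = F
  have hNQ : (N : ℚ) = (s : ℚ) + m + k := by exact_mod_cast hk
  rw [hNQ]
  have hm1 : (1 : ℚ) ≤ m := by exact_mod_cast hm
  have d1 : (s : ℚ) + m ≠ 0 := by positivity
  have d2 : (s : ℚ) + m + 1 ≠ 0 := by positivity
  have d3 : (s : ℚ) + 1 ≠ 0 := by positivity
  have d4 : (k : ℚ) + 1 ≠ 0 := by positivity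
  have d5 : (s : ℚ) + m + k - m + 1 ≠ 0 := by
    have : (0:ℚ) ≤ s := by positivity
    have : (0:ℚ) ≤ k := by positivity
    intro h; nlinarith
  have d6 : (s : ℚ) + m + k + 1 ≠ 0 := by positivity
  push_cast
  field_simp
  ring

private lemma Gb_zero (N m : ℕ) : Gb N m 0 = 0 := by
  simp [Gb]

private lemma Gb_boundary (N m : ℕ) (hm : 1 ≤ m) (hmN : m ≤ N) :
    Gb N m (N - m + 1) = -Tb (N + 1) m (N - m + 1) := by
  have hc : ((N - m + 1 : ℕ) : ℚ) = (N : ℚ) - m + 1 := by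
    push_cast [Nat.cast_sub hmN]; ring
  have hmQ : (m : ℚ) ≤ N := by exact_mod_cast hmN
  have hm1 : (1 : ℚ) ≤ m := by exact_mod_cast hm
  have d3 : (N : ℚ) - m + 1 ≠ 0 := by nlinarith
  have d4 : (N : ℚ) + 1 ≠ 0 := by positivity
  rw [Gb, hc]
  rw [show -(((N : ℚ) - m + 1) * (((N : ℚ) - m + 1) + m) * (((N : ℚ) - m + 1) + N + m + 1)) /
      (2 * ((N : ℚ) - m + 1) * ((N : ℚ) + 1) ^ 2) = -1 from by field_simp; ring]
  ring

private lemma base_case (m : ℕ) (hm : 1 ≤ m) :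
    ∑ s ∈ Finset.range (m - m + 1), Tb m m s = 1 := by
  rw [show m - m + 1 = 1 from by omega, Finset.sum_range_one]
  simp only [Tb]
  have h1 : m.choose (0 + m) = 1 := by simp
  have h2 : m + 0 + m = 2 * m := by omega
  have h3 : (2 * m - 1 + 0).choose (2 * m - 1) = 1 := by simp
  have h4 : ((2 * m).choose m : ℚ) ≠ 0 := by
    exact_mod_cast (Nat.choose_pos (show m ≤ 2 * m by omega)).ne'
  rw [h1, h2, h3]
  have h5 : (m : ℚ) ≠ 0 := by
    exact_mod_cast (show m ≠ 0 by omega)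
  push_cast
  field_simp
  rw [zero_add, mul_div_assoc, div_self h4, mul_one]
  ring

/-- The binomial identity of Lemma 5.2 (used in the deduction of Zhao's truncated
2-1 formula). -/
theorem binom_identity (N m : ℕ) (h1 : 1 ≤ m) (h2 : m ≤ N) :
    ∑ s ∈ Finset.range (N - m + 1),
      ((N.choose (s + m) : ℚ) / ((N + s + m).choose (s + m) : ℚ)) *
        ((m : ℚ) / ((s : ℚ) + (m : ℚ))) * (-1 : ℚ) ^ s *
        (((2 * m).choose m : ℚ)) * (((2 * m - 1 + s).choose (2 * m - 1) : ℚ)) = 1 := by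
  have key : ∀ n, m ≤ n → ∑ s ∈ Finset.range (n - m + 1), Tb n m s = 1 := by
    intro n hn
    induction n, hn using Nat.le_induction with
    | base => exact base_case m h1
    | succ n hn ih =>
      have hrange : n + 1 - m + 1 = (n - m + 1) + 1 := by omega
      rw [hrange, Finset.sum_range_succ]
      have hsum : ∑ s ∈ Finset.range (n - m + 1), Tb (n + 1) m s
          = ∑ s ∈ Finset.range (n - m + 1), (Tb n m s + (Gb n m (s + 1) - Gb n m s)) := by
        refine Finset.sum_congr rfl fun s hs => ?_
        have hs' : s + m ≤ n := by
          have := Finset.mem_range.mp hs; omega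
        have := tele n m s h1 hs'
        linarith
      rw [hsum, Finset.sum_add_distrib, ih, Finset.sum_range_sub (Gb n m), Gb_zero]
      have hb := Gb_boundary n m h1 hn
      rw [hb]
      ring
  have := key N h2
  simpa [Tb] using this
end

section
/- For every real y with 0 ≤ y ≤ π/2, ∑_{n=1}^∞ (4·sin²y)^n / ( n² · binom(2n, n) ) = 2y². -/
open scoped BigOperators
open Set Filter Real Topology



noncomputable def cbA (n : ℕ) : ℝ := 4 ^ n / ((n : ℝ) ^ 2 * (Nat.centralBinom n : ℝ))

lemma cb_pos (n : ℕ) : (0:ℝ) < (Nat.centralBinom n : ℝ) := by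
  exact_mod_cast Nat.centralBinom_pos n

lemma cbA_pos (n : ℕ) (hn : 1 ≤ n) : 0 < cbA n := by
  have := cb_pos n
  have hn' : (0:ℝ) < (n:ℝ) := by exact_mod_cast hn
  unfold cbA
  positivity

lemma cbA_nonneg (n : ℕ) : 0 ≤ cbA n := by
  have := cb_pos n
  unfold cbA
  positivity

lemma cbA_one : cbA 1 = 2 := by
  norm_num [cbA, Nat.centralBinom, Nat.choose]

lemma cbA_le (n : ℕ) (hn : 1 ≤ n) : cbA n ≤ 2 / n := by
  have h := Nat.four_pow_le_two_mul_self_mul_centralBinom n hn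
  have h' : (4:ℝ) ^ n ≤ 2 * n * (Nat.centralBinom n : ℝ) := by exact_mod_cast h
  have hc := cb_pos n
  have hn' : (0:ℝ) < (n:ℝ) := by exact_mod_cast hn
  rw [cbA, div_le_div_iff₀ (by positivity) hn']
  nlinarith [pow_pos (show (0:ℝ) < 4 by norm_num) n]

lemma cbA_rec (k : ℕ) :
    cbA (k+2) * ((2*(k:ℝ)+4) * (2*(k:ℝ)+3)) = 4 * ((k:ℝ)+1)^2 * cbA (k+1) := by
  have h := Nat.succ_mul_centralBinom_succ (k+1)
  have h' : ((k:ℝ)+2) * (Nat.centralBinom (k+2) : ℝ)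
      = 2 * (2*(k:ℝ)+3) * (Nat.centralBinom (k+1) : ℝ) := by
    have h2 := congrArg (Nat.cast : ℕ → ℝ) h
    push_cast at h2
    linarith [h2]
  have hc1 := cb_pos (k+1)
  have hc2 := cb_pos (k+2)
  have hk1 : ((k:ℝ)+1) ≠ 0 := by positivity
  have hk2 : ((k:ℝ)+2) ≠ 0 := by positivity
  rw [cbA, cbA]
  push_cast
  field_simp
  linear_combination (-(4:ℝ)^(k+2)*((k:ℝ)+2)) * h'


-- 16^n ≤ 4 n (centralBinom n)^2 for n ≥ 1
lemma sixteen_pow_le (n : ℕ) (hn : 1 ≤ n) : 16 ^ n ≤ 4 * n * (Nat.centralBinom n)^2 := by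
  induction n with
  | zero => omega
  | succ k ih =>
    rcases Nat.eq_or_lt_of_le hn with h1 | h1
    · simp [← h1]
      norm_num [Nat.centralBinom, Nat.choose]
    · have hk : 1 ≤ k := by omega
      have IH := ih hk
      have hrec := Nat.succ_mul_centralBinom_succ k
      -- (k+1) * c(k+1) = 2(2k+1) * c k
      have key : 16 ^ (k+1) * (k+1) ≤ 4 * (k+1) * (Nat.centralBinom (k+1))^2 * (k+1) := by
        calc 16 ^ (k+1) * (k+1) = 16 * 16^k * (k+1) := by ring
          _ ≤ 16 * (4 * k * (Nat.centralBinom k)^2) * (k+1) := by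
              exact Nat.mul_le_mul_right _ (Nat.mul_le_mul_left 16 IH)
          _ ≤ 16 * (2*k+1)^2 * (Nat.centralBinom k)^2 := by nlinarith
          _ = 4 * (2 * (2*k+1) * Nat.centralBinom k)^2 := by ring
          _ = 4 * ((k+1) * Nat.centralBinom (k+1))^2 := by rw [hrec]
          _ = 4 * (k+1) * (Nat.centralBinom (k+1))^2 * (k+1) := by ring
      exact Nat.le_of_mul_le_mul_right key (by omega)

lemma four_pow_le_sqrt (n : ℕ) (hn : 1 ≤ n) :
    (4:ℝ) ^ n ≤ 2 * Real.sqrt n * (Nat.centralBinom n : ℝ) := by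
  have h := sixteen_pow_le n hn
  have h' : ((16:ℝ)) ^ n ≤ 4 * n * ((Nat.centralBinom n : ℝ))^2 := by exact_mod_cast h
  have hn' : (0:ℝ) ≤ (n:ℝ) := Nat.cast_nonneg n
  have hc : (0:ℝ) ≤ (Nat.centralBinom n : ℝ) := (Nat.cast_nonneg _)
  have h4 : ((4:ℝ)^n)^2 ≤ (2 * Real.sqrt n * (Nat.centralBinom n : ℝ))^2 := by
    have : (2 * Real.sqrt n * (Nat.centralBinom n : ℝ))^2
        = 4 * n * ((Nat.centralBinom n : ℝ))^2 := by
      rw [mul_pow, mul_pow]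
      rw [Real.sq_sqrt hn']
      ring
    rw [this]
    calc ((4:ℝ)^n)^2 = (16:ℝ)^n := by rw [← pow_mul, pow_mul']; norm_num
      _ ≤ _ := h'
  have h5 : (0:ℝ) ≤ 2 * Real.sqrt n * (Nat.centralBinom n : ℝ) := by positivity
  nlinarith [pow_pos (show (0:ℝ) < 4 by norm_num) n]


lemma cbA_le_rpow (n : ℕ) (hn : 1 ≤ n) : cbA n ≤ 2 / (n:ℝ) ^ ((3:ℝ)/2) := by
  have hn' : (0:ℝ) < (n:ℝ) := by exact_mod_cast hn
  have hc := cb_pos n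
  have h := four_pow_le_sqrt n hn
  have key : Real.sqrt n * (n:ℝ) ^ ((3:ℝ)/2) = (n:ℝ)^2 := by
    rw [Real.sqrt_eq_rpow, ← Real.rpow_add hn', ← Real.rpow_natCast (n:ℝ) 2]
    norm_num
  have h2 : cbA n ≤ 2 * Real.sqrt n / (n:ℝ)^2 := by
    rw [cbA, div_le_div_iff₀ (by positivity) (by positivity)]
    calc (4:ℝ)^n * (n:ℝ)^2 ≤ (2 * Real.sqrt n * (Nat.centralBinom n : ℝ)) * (n:ℝ)^2 := by
          exact mul_le_mul_of_nonneg_right h (by positivity)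
      _ = 2 * Real.sqrt n * ((n:ℝ)^2 * (Nat.centralBinom n : ℝ)) := by ring
  refine h2.trans (le_of_eq ?_)
  rw [← key]
  have hs : (0:ℝ) < Real.sqrt n := Real.sqrt_pos.2 hn'
  field_simp

lemma summable_cbA : Summable (fun k : ℕ => cbA (k+1)) := by
  have h1 : Summable (fun k : ℕ => 2 / ((k:ℝ)+1) ^ ((3:ℝ)/2)) := by
    have := (Real.summable_one_div_nat_rpow (p := (3:ℝ)/2)).2 (by norm_num)
    have h2 := (summable_nat_add_iff 1).2 this
    simpa [div_eq_mul_inv] using h2.mul_left 2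
  apply Summable.of_nonneg_of_le (fun k => ?_) (fun k => ?_) h1
  · have := cb_pos (k+1); unfold cbA; positivity
  · have := cbA_le_rpow (k+1) (by omega)
    simpa using this


noncomputable def sf (k : ℕ) (y : ℝ) : ℝ := cbA (k+1) * Real.sin y ^ (2*(k+1))
noncomputable def sf1 (k : ℕ) (y : ℝ) : ℝ :=
  cbA (k+1) * (2*(k:ℝ)+2) * Real.sin y ^ (2*k+1) * Real.cos y
noncomputable def sf2 (k : ℕ) (y : ℝ) : ℝ :=
  cbA (k+1) * (2*(k:ℝ)+2) *
    ((2*(k:ℝ)+1) * Real.sin y ^ (2*k) * Real.cos y ^ 2 - Real.sin y ^ (2*(k+1)))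
noncomputable def sW : ℕ → ℝ → ℝ
  | 0, _ => 4
  | (k+1), y => 4 * ((k:ℝ)+1)^2 * cbA (k+1) * Real.sin y ^ (2*(k+1))

lemma hasDerivAt_sf (k : ℕ) (y : ℝ) : HasDerivAt (sf k) (sf1 k y) y := by
  have h := ((Real.hasDerivAt_sin y).pow (2*(k+1))).const_mul (cbA (k+1))
  refine h.congr_deriv ?_
  have : 2*(k+1) - 1 = 2*k+1 := by omega
  rw [this, sf1]
  push_cast
  ring

lemma hasDerivAt_sf1 (k : ℕ) (y : ℝ) : HasDerivAt (sf1 k) (sf2 k y) y := by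
  have h := (((Real.hasDerivAt_sin y).pow (2*k+1)).mul (Real.hasDerivAt_cos y)).const_mul
    (cbA (k+1) * (2*(k:ℝ)+2))
  convert h using 1
  · rfl
  · rfl
  · funext t; rw [sf1]; simp only [Pi.mul_apply, Pi.pow_apply]; ring
  · have : 2*k+1 - 1 = 2*k := by omega
    rw [this, sf2]
    push_cast
    simp only [Pi.pow_apply]
    ring

lemma sf2_eq (k : ℕ) (y : ℝ) : sf2 k y = sW k y - sW (k+1) y := by
  cases k with
  | zero =>
    simp only [sf2, sW]
    rw [Real.cos_sq']
    norm_num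
    rw [cbA_one]
    ring
  | succ m =>
    simp only [sf2, sW]
    rw [Real.cos_sq']
    have h := cbA_rec m
    have e1 : 2*(m+1) = 2*m+2 := by ring
    have e2 : 2*(m+1+1) = 2*m+4 := by ring
    rw [e1, e2]
    push_cast
    linear_combination (Real.sin y ^ (2*m+2)) * h

open Set Filter Real Topology

noncomputable def sF (y : ℝ) : ℝ := ∑' k : ℕ, sf k y
noncomputable def sG (y : ℝ) : ℝ := ∑' k : ℕ, sf1 k y

-- coefficient bound : cbA (k+1) * (2k+2) ≤ 4
lemma coeff_le (k : ℕ) : cbA (k+1) * (2*(k:ℝ)+2) ≤ 4 := by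
  have h := cbA_le (k+1) (by omega)
  have hk : (0:ℝ) < (k:ℝ)+1 := by positivity
  have h2 : cbA (k+1) * (2*(k:ℝ)+2) ≤ (2/((k:ℝ)+1)) * (2*(k:ℝ)+2) := by
    apply mul_le_mul_of_nonneg_right _ (by positivity)
    simpa using h
  calc cbA (k+1) * (2*(k:ℝ)+2) ≤ (2/((k:ℝ)+1)) * (2*(k:ℝ)+2) := h2
    _ = 4 := by field_simp; ring

lemma sf_zero (k : ℕ) : sf k 0 = 0 := by simp [sf]
lemma sf1_zero (k : ℕ) : sf1 k 0 = 0 := by simp [sf1]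

set_option maxHeartbeats 2000000 in
lemma key (y : ℝ) (hy0 : 0 ≤ y) (hy1 : y < Real.pi/2) : sF y = 2 * y^2 := by
  set b : ℝ := (y + Real.pi/2)/2 with hb
  have hpi : (0:ℝ) < Real.pi/2 := by positivity
  have hb0 : 0 < b := by simp [hb]; linarith
  have hyb : y < b := by simp [hb]; linarith
  have hbpi : b < Real.pi/2 := by simp [hb]; linarith
  set q : ℝ := Real.sin b with hq
  have hq0 : 0 < q := Real.sin_pos_of_pos_of_lt_pi hb0 (by linarith [Real.pi_pos])
  have hq1 : q < 1 := by
    calc q < Real.sin (Real.pi/2) := by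
          apply Real.strictMonoOn_sin ⟨by linarith, hbpi.le⟩ ⟨by linarith, le_refl _⟩ hbpi
      _ = 1 := Real.sin_pi_div_two
  have hq2 : q^2 < 1 := by nlinarith
  have hq2' : (0:ℝ) ≤ q^2 := sq_nonneg q
  set s : Set ℝ := Ioo (-b) b with hs
  have hso : IsOpen s := isOpen_Ioo
  have hsc : IsPreconnected s := (convex_Ioo _ _).isPreconnected
  have h0s : (0:ℝ) ∈ s := ⟨by linarith, hb0⟩
  have hys : y ∈ s := ⟨by linarith, hyb⟩
  have habs : ∀ t ∈ s, |Real.sin t| ≤ q := by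
    intro t ht
    rw [abs_le]
    constructor
    · have : Real.sin (-b) ≤ Real.sin t := by
        apply (Real.strictMonoOn_sin.monotoneOn) ⟨by linarith, by linarith⟩
          ⟨ht.1.le.trans' (by linarith), by linarith [ht.2]⟩ ht.1.le
      rwa [Real.sin_neg] at this
    · apply (Real.strictMonoOn_sin.monotoneOn) ⟨by linarith [ht.1], by linarith [ht.2]⟩
        ⟨by linarith, by linarith⟩ ht.2.le
  -- summable bounds
  have hu1 : Summable (fun k : ℕ => (4*q) * (q^2)^k) :=
    (summable_geometric_of_lt_one hq2' hq2).mul_left _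
  have hu2 : Summable (fun k : ℕ => (8*(k:ℝ)+8) * (q^2)^k) := by
    have h1 : Summable (fun k : ℕ => (k:ℝ) * (q^2)^k) := by
      have := summable_pow_mul_geometric_of_norm_lt_one 1 (r := q^2)
        (by rwa [Real.norm_eq_abs, abs_of_nonneg hq2'])
      simpa using this
    have h2 := (summable_geometric_of_lt_one hq2' hq2)
    have := (h1.mul_left 8).add (h2.mul_left 8)
    convert this using 2 with k
    · rfl
    ring
  have hbound1 : ∀ (k : ℕ), ∀ t ∈ s, ‖sf1 k t‖ ≤ (4*q) * (q^2)^k := by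
    intro k t ht
    rw [sf1, Real.norm_eq_abs]
    have h1 : |Real.sin t| ^ (2*k+1) ≤ q^(2*k+1) :=
      pow_le_pow_left₀ (abs_nonneg _) (habs t ht) _
    have h2 : |Real.cos t| ≤ 1 := Real.abs_cos_le_one t
    have hA : 0 ≤ cbA (k+1) * (2*(k:ℝ)+2) := by
      have := cbA_nonneg (k+1); positivity
    calc |cbA (k+1) * (2*(k:ℝ)+2) * Real.sin t ^ (2*k+1) * Real.cos t|
        = (cbA (k+1) * (2*(k:ℝ)+2)) * |Real.sin t| ^ (2*k+1) * |Real.cos t| := by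
          rw [abs_mul, abs_mul, abs_pow, abs_of_nonneg hA]
      _ ≤ 4 * q^(2*k+1) * 1 := by
          apply mul_le_mul _ h2 (abs_nonneg _) (by positivity)
          exact mul_le_mul (coeff_le k) h1 (by positivity) (by norm_num)
      _ = (4*q) * (q^2)^k := by rw [← pow_mul]; ring
  have hbound2 : ∀ (k : ℕ), ∀ t ∈ s, ‖sf2 k t‖ ≤ (8*(k:ℝ)+8) * (q^2)^k := by
    intro k t ht
    rw [sf2, Real.norm_eq_abs]
    have h1 : |Real.sin t| ^ (2*k) ≤ q^(2*k) :=
      pow_le_pow_left₀ (abs_nonneg _) (habs t ht) _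
    have h1' : |Real.sin t| ^ (2*(k+1)) ≤ q^(2*k) := by
      calc |Real.sin t| ^ (2*(k+1)) ≤ q ^ (2*(k+1)) :=
            pow_le_pow_left₀ (abs_nonneg _) (habs t ht) _
        _ ≤ q^(2*k) := pow_le_pow_of_le_one hq0.le hq1.le (by omega)
      
    have h2 : |Real.cos t| ≤ 1 := Real.abs_cos_le_one t
    have hA : 0 ≤ cbA (k+1) * (2*(k:ℝ)+2) := by
      have := cbA_nonneg (k+1); positivity
    have hin : |(2*(k:ℝ)+1) * Real.sin t ^ (2*k) * Real.cos t ^ 2 - Real.sin t ^ (2*(k+1))|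
        ≤ (2*(k:ℝ)+2) * q^(2*k) := by
      calc |(2*(k:ℝ)+1) * Real.sin t ^ (2*k) * Real.cos t ^ 2 - Real.sin t ^ (2*(k+1))|
          ≤ |(2*(k:ℝ)+1) * Real.sin t ^ (2*k) * Real.cos t ^ 2| + |Real.sin t ^ (2*(k+1))| :=
            abs_sub _ _
        _ ≤ (2*(k:ℝ)+1) * q^(2*k) * 1 + q^(2*k) := by
            apply add_le_add
            · rw [abs_mul, abs_mul, abs_pow, abs_pow, abs_of_nonneg (by positivity : (0:ℝ) ≤ 2*(k:ℝ)+1)]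
              apply mul_le_mul _ _ (sq_nonneg _) (by positivity)
              · exact mul_le_mul_of_nonneg_left h1 (by positivity)
              · rw [sq_abs]; exact Real.cos_sq_le_one t
            · rw [abs_pow]; exact h1'
        _ = (2*(k:ℝ)+2) * q^(2*k) := by ring
    calc |cbA (k+1) * (2*(k:ℝ)+2) * ((2*(k:ℝ)+1) * Real.sin t ^ (2*k) * Real.cos t ^ 2
            - Real.sin t ^ (2*(k+1)))|
        = (cbA (k+1) * (2*(k:ℝ)+2)) * |(2*(k:ℝ)+1) * Real.sin t ^ (2*k) * Real.cos t ^ 2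
            - Real.sin t ^ (2*(k+1))| := by rw [abs_mul, abs_of_nonneg hA]
      _ ≤ 4 * ((2*(k:ℝ)+2) * q^(2*k)) := by
          apply mul_le_mul (coeff_le k) hin (abs_nonneg _) (by norm_num)
      _ = (8*(k:ℝ)+8) * (q^2)^k := by rw [← pow_mul]; ring
  -- summability at 0
  have hsum0 : Summable (fun k : ℕ => sf k 0) := by
    simp only [sf_zero]; exact summable_zero
  have hsum1_0 : Summable (fun k : ℕ => sf1 k 0) := by
    simp only [sf1_zero]; exact summable_zero
  -- derivative of sF is sG on s
  have hDF : ∀ t ∈ s, HasDerivAt sF (sG t) t := by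
    intro t ht
    exact hasDerivAt_tsum_of_isPreconnected hu1 hso hsc
      (fun k x hx => hasDerivAt_sf k x) hbound1 h0s hsum0 ht
  -- derivative of sG is (∑' sf2) on s, which equals 4
  have hsum2 : ∀ t ∈ s, Summable (fun k : ℕ => sf2 k t) := by
    intro t ht
    exact hu2.of_norm_bounded (fun k => hbound2 k t ht)
  have hW0 : ∀ t ∈ s, Tendsto (fun k => sW k t) atTop (𝓝 0) := by
    intro t ht
    rw [← tendsto_add_atTop_iff_nat 1]
    have htend : Tendsto (fun k : ℕ => (8*((k:ℝ)+1)) * (q^2)^(k+1)) atTop (𝓝 0) := by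
      have h1 : Summable (fun k : ℕ => ((k:ℝ)+1) * (q^2)^(k+1)) := by
        have := summable_pow_mul_geometric_of_norm_lt_one 1 (r := q^2)
          (by rwa [Real.norm_eq_abs, abs_of_nonneg hq2'])
        have h2 := (summable_nat_add_iff 1).2 (by simpa using this)
        simpa using h2
      have h3 : Summable (fun k : ℕ => (8*((k:ℝ)+1)) * (q^2)^(k+1)) := by
        simpa [mul_assoc] using h1.mul_left 8
      exact h3.tendsto_atTop_zero
    apply squeeze_zero (fun k => ?_) (fun k => ?_) htend
    · show 0 ≤ sW (k+1) t
      simp only [sW]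
      have := cbA_nonneg (k+1)
      rw [pow_mul]
      positivity
    · show sW (k+1) t ≤ (8*((k:ℝ)+1)) * (q^2)^(k+1)
      simp only [sW]
      have hA := cbA_le (k+1) (by omega)
      have hsin : Real.sin t ^ (2*(k+1)) ≤ (q^2)^(k+1) := by
        rw [pow_mul]
        apply pow_le_pow_left₀ (sq_nonneg _)
        rw [sq, sq, ← abs_mul_abs_self]
        exact mul_le_mul (habs t ht) (habs t ht) (abs_nonneg _) hq0.le
      have hsin0 : (0:ℝ) ≤ Real.sin t ^ (2*(k+1)) := by
        rw [pow_mul]; positivity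
      calc 4 * ((k:ℝ)+1)^2 * cbA (k+1) * Real.sin t ^ (2*(k+1))
          ≤ 4 * ((k:ℝ)+1)^2 * (2/((k:ℝ)+1)) * (q^2)^(k+1) := by
            apply mul_le_mul _ hsin hsin0 (by positivity)
            apply mul_le_mul_of_nonneg_left _ (by positivity)
            simpa using hA
        _ = (8*((k:ℝ)+1)) * (q^2)^(k+1) := by field_simp; ring
  have hH4 : ∀ t ∈ s, (∑' k : ℕ, sf2 k t) = 4 := by
    intro t ht
    have hsum := hsum2 t ht
    have h1 := hsum.hasSum.tendsto_sum_nat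
    have h2 : Tendsto (fun N => ∑ k ∈ Finset.range N, sf2 k t) atTop (𝓝 4) := by
      have heq : ∀ N, ∑ k ∈ Finset.range N, sf2 k t = 4 - sW N t := by
        intro N
        calc ∑ k ∈ Finset.range N, sf2 k t
            = ∑ k ∈ Finset.range N, (sW k t - sW (k+1) t) :=
              Finset.sum_congr rfl (fun k _ => sf2_eq k t)
          _ = sW 0 t - sW N t := Finset.sum_range_sub' (fun k => sW k t) N
          _ = 4 - sW N t := by rfl
      simp only [heq]
      have := (hW0 t ht).const_sub 4
      simpa using this
    exact tendsto_nhds_unique h1 h2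
  have hDG : ∀ t ∈ s, HasDerivAt sG (∑' k : ℕ, sf2 k t) t := by
    intro t ht
    exact hasDerivAt_tsum_of_isPreconnected hu2 hso hsc
      (fun k x _ => hasDerivAt_sf1 k x) hbound2 h0s hsum1_0 ht
  have hsub : Icc 0 y ⊆ s := by
    intro t ht
    exact ⟨by linarith [ht.1], by linarith [ht.2]⟩
  have hG4 : ∀ t ∈ Icc 0 y, sG t = 4 * t := by
    apply eq_of_has_deriv_right_eq (f' := fun _ => (4:ℝ))
    · intro x hx
      have hxs : x ∈ s := hsub (Ico_subset_Icc_self hx)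
      have h := hDG x hxs
      rw [hH4 x hxs] at h
      exact h.hasDerivWithinAt
    · intro x hx
      have : HasDerivAt (fun t : ℝ => 4*t) 4 x := by
        simpa using (hasDerivAt_id x).const_mul (4:ℝ)
      exact this.hasDerivWithinAt
    · intro x hx
      exact (hDG x (hsub hx)).continuousAt.continuousWithinAt
    · exact (continuous_const.mul continuous_id).continuousOn
    · simp [sG, sf1_zero]
  have hF2 : ∀ t ∈ Icc 0 y, sF t = 2 * t^2 := by
    apply eq_of_has_deriv_right_eq (f' := fun x => sG x)
    · intro x hx
      exact (hDF x (hsub (Ico_subset_Icc_self hx))).hasDerivWithinAt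
    · intro x hx
      have h4 : HasDerivAt (fun t : ℝ => 2*t^2) (4*x) x := by
        have := (hasDerivAt_pow 2 x).const_mul (2:ℝ)
        norm_num at this
        convert this using 1
        · rfl
        · rfl
        ring
      rw [hG4 x (Ico_subset_Icc_self hx)]
      exact h4.hasDerivWithinAt
    · intro x hx
      exact (hDF x (hsub hx)).continuousAt.continuousWithinAt
    · exact (continuous_const.mul (continuous_pow 2)).continuousOn
    · simp [sF, sf_zero]
  exact hF2 y ⟨hy0, le_refl y⟩


lemma sF_continuous : Continuous sF := by
  apply continuous_tsum (f := sf) (u := fun k => cbA (k+1))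
  · intro k
    exact continuous_const.mul (Real.continuous_sin.pow _)
  · exact summable_cbA
  · intro k x
    rw [sf, Real.norm_eq_abs, abs_mul, abs_of_nonneg (cbA_nonneg (k+1)), abs_pow]
    calc cbA (k+1) * |Real.sin x| ^ (2*(k+1)) ≤ cbA (k+1) * 1 ^ (2*(k+1)) := by
          apply mul_le_mul_of_nonneg_left _ (cbA_nonneg (k+1))
          exact pow_le_pow_left₀ (abs_nonneg _) (Real.abs_sin_le_one x) _
      _ = cbA (k+1) := by norm_num

lemma key' (y : ℝ) (hy0 : 0 ≤ y) (hy1 : y ≤ Real.pi/2) : sF y = 2 * y^2 := by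
  rcases lt_or_eq_of_le hy1 with h | h
  · exact key y hy0 h
  · subst h
    have hpi : (0:ℝ) < Real.pi/2 := by positivity
    have h1 : Tendsto sF (𝓝[<] (Real.pi/2)) (𝓝 (sF (Real.pi/2))) :=
      (sF_continuous.continuousAt).continuousWithinAt
    have hmem : Ioo (0:ℝ) (Real.pi/2) ∈ 𝓝[<] (Real.pi/2) :=
      Ioo_mem_nhdsLT_of_mem ⟨hpi, le_refl _⟩
    have heq : sF =ᶠ[𝓝[<] (Real.pi/2)] (fun t => 2 * t^2) := by
      filter_upwards [hmem] with t ht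
      exact key t ht.1.le ht.2
    have h2 : Tendsto (fun t : ℝ => 2 * t^2) (𝓝[<] (Real.pi/2))
        (𝓝 (2 * (Real.pi/2)^2)) := by
      apply Tendsto.mono_left _ nhdsWithin_le_nhds
      exact (continuous_const.mul (continuous_pow 2)).tendsto _
    have h3 : Tendsto sF (𝓝[<] (Real.pi/2)) (𝓝 (2 * (Real.pi/2)^2)) :=
      Tendsto.congr' heq.symm h2
    exact tendsto_nhds_unique h1 h3

/-- ∑_{n≥1} (4 sin²y)^n / (n² C(2n,n)) = 2y² for 0 ≤ y ≤ π/2. -/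
theorem central_binom_sin_sum (y : ℝ) (h0 : 0 ≤ y) (h1 : y ≤ Real.pi / 2) :
    ∑' n : ℕ+, (4 * Real.sin y ^ 2) ^ (n : ℕ) /
      (((n : ℕ) : ℝ) ^ 2 * ((2 * (n : ℕ)).choose (n : ℕ) : ℝ)) = 2 * y ^ 2 := by
  have hequiv := (Equiv.pnatEquivNat.symm).tsum_eq
    (f := fun n : ℕ+ => (4 * Real.sin y ^ 2) ^ (n : ℕ) /
      (((n : ℕ) : ℝ) ^ 2 * ((2 * (n : ℕ)).choose (n : ℕ) : ℝ)))
  rw [← hequiv]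
  have hterm : ∀ k : ℕ, (4 * Real.sin y ^ 2) ^ ((Equiv.pnatEquivNat.symm k : ℕ+) : ℕ) /
      ((((Equiv.pnatEquivNat.symm k : ℕ+) : ℕ) : ℝ) ^ 2 *
        ((2 * ((Equiv.pnatEquivNat.symm k : ℕ+) : ℕ)).choose
          ((Equiv.pnatEquivNat.symm k : ℕ+) : ℕ) : ℝ)) = sf k y := by
    intro k
    have hco : ((Equiv.pnatEquivNat.symm k : ℕ+) : ℕ) = k + 1 := by
      simp [Equiv.pnatEquivNat, Nat.succPNat]
    rw [hco]
    have hcb : ((2 * (k+1)).choose (k+1) : ℝ) = (Nat.centralBinom (k+1) : ℝ) := by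
      rw [Nat.centralBinom_eq_two_mul_choose]
    rw [hcb, sf, cbA]
    rw [mul_pow, ← pow_mul]
    push_cast
    ring
  calc (∑' k : ℕ, (4 * Real.sin y ^ 2) ^ ((Equiv.pnatEquivNat.symm k : ℕ+) : ℕ) /
      ((((Equiv.pnatEquivNat.symm k : ℕ+) : ℕ) : ℝ) ^ 2 *
        ((2 * ((Equiv.pnatEquivNat.symm k : ℕ+) : ℕ)).choose
          ((Equiv.pnatEquivNat.symm k : ℕ+) : ℕ) : ℝ)))
      = ∑' k : ℕ, sf k y := by
        apply tsum_congr
        exact hterm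
    _ = sF y := rfl
    _ = 2 * y ^ 2 := key' y h0 h1
end
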